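/- For every natural number n, the number of words of length n over the alphabet {−1, 0, 1} whose total sum is 0 and all of whose partial sums are nonnegative equals the n-th Motzkin number M_n. -/

import Mathlib

def motzkin : ℕ → ℕ
  | 0 => 1
  | n + 1 => motzkin n + ∑ i ∈ (Finset.range n).attach, motzkin i.1 * motzkin (n - 1 - i.1)
  termination_by n => n
  decreasing_by
  · exact Nat.lt_succ_self n
  · have := Finset.mem_range.mp i.2; omega
  · omega

def Mset (n : ℕ) : Set (List ℤ) :=
  {w : List ℤ | w.length = n ∧ (∀ x ∈ w, x = 1 ∨ x = 0 ∨ x = -1) ∧ w.sum = 0 ∧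
      ∀ p, p <+: w → 0 ≤ p.sum}

lemma prefix_append_cases {α : Type*} {p u v : List α} (h : p <+: u ++ v) :
    p <+: u ∨ ∃ q, p = u ++ q ∧ q <+: v := by
  induction u generalizing p with
  | nil => exact Or.inr ⟨p, rfl, h⟩
  | cons a u ih =>
    rcases List.prefix_cons_iff.mp h with rfl | ⟨t, rfl, ht⟩
    · exact Or.inl (List.nil_prefix)
    · rcases ih ht with h1 | ⟨q, rfl, hq⟩
      · exact Or.inl (by simpa using h1)
      · exact Or.inr ⟨q, rfl, hq⟩

lemma Mset_finite (n : ℕ) : (Mset n).Finite := by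
  have key : ∀ n, {w : List ℤ | w.length = n ∧ ∀ x ∈ w, x = 1 ∨ x = 0 ∨ x = -1}.Finite := by
    intro n
    induction n with
    | zero =>
      apply Set.Finite.subset (Set.finite_singleton ([] : List ℤ))
      rintro w ⟨hl, -⟩
      simpa using List.length_eq_zero_iff.mp hl
    | succ n ih =>
      apply Set.Finite.subset
        (Set.Finite.image (fun p : ℤ × List ℤ => p.1 :: p.2)
          (Set.Finite.prod (Set.toFinite ({1,0,-1} : Set ℤ)) ih))
      rintro w ⟨hl, ha⟩
      match w with
      | a :: t =>
        refine ⟨(a, t), ⟨?_, ?_, fun x hx => ha x (List.mem_cons_of_mem a hx)⟩, rfl⟩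
        · simpa using ha a List.mem_cons_self
        · simpa using hl
  exact Set.Finite.subset (key n) (fun w hw => ⟨hw.1, hw.2.1⟩)

lemma mem_zero_cons {n : ℕ} {t : List ℤ} (ht : t ∈ Mset n) : ((0 : ℤ) :: t) ∈ Mset (n + 1) := by
  obtain ⟨hl, ha, hs, hp⟩ := ht
  refine ⟨by simp [hl], ?_, by simp [hs], ?_⟩
  · rintro x hx
    rcases List.mem_cons.mp hx with rfl | hx
    · right; left; rfl
    · exact ha x hx
  · intro p hp'
    rcases List.prefix_cons_iff.mp hp' with rfl | ⟨q, rfl, hq⟩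
    · simp
    · simpa using hp q hq

lemma mem_one_cons {n i : ℕ} {u v : List ℤ} (hi : i < n) (hu : u ∈ Mset i)
    (hv : v ∈ Mset (n - 1 - i)) : ((1 : ℤ) :: u ++ (-1) :: v) ∈ Mset (n + 1) := by
  obtain ⟨hlu, hau, hsu, hpu⟩ := hu
  obtain ⟨hlv, hav, hsv, hpv⟩ := hv
  refine ⟨?_, ?_, ?_, ?_⟩
  · simp only [List.length_cons, List.length_append, hlu, hlv]; omega
  · intro x hx
    simp only [List.cons_append, List.mem_cons, List.mem_append] at hx
    rcases hx with rfl | hx | hx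
    · left; rfl
    · exact hau x hx
    · rcases hx with rfl | hx
      · right; right; rfl
      · exact hav x hx
  · simp [hsu, hsv]
  · intro p hp'
    rcases List.prefix_cons_iff.mp hp' with rfl | ⟨q, rfl, hq⟩
    · simp
    · rcases prefix_append_cases hq with h1 | ⟨r, rfl, hr⟩
      · have := hpu _ h1; simp; omega
      · rcases List.prefix_cons_iff.mp hr with rfl | ⟨s, rfl, hs⟩
        · simp [hsu]
        · have := hpv _ hs
          simp [hsu]
          omega

lemma prefix_of_prefix_append {α : Type*} {p u v : List α} (h : p <+: u ++ v)
    (hl : p.length ≤ u.length) : p <+: u := by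
  rcases prefix_append_cases h with h1 | ⟨q, rfl, hq⟩
  · exact h1
  · have : q = [] := by
      rw [List.length_append] at hl
      exact List.length_eq_zero_iff.mp (by omega)
    simp [this]

lemma decomp {n : ℕ} {w : List ℤ} (hw : w ∈ Mset (n + 1)) :
    (∃ t ∈ Mset n, w = (0 : ℤ) :: t) ∨
    ∃ i < n, ∃ u ∈ Mset i, ∃ v ∈ Mset (n - 1 - i), w = (1 : ℤ) :: u ++ (-1) :: v := by
  obtain ⟨hl, ha, hs, hp⟩ := hw
  match w, hl with
  | a :: t, hl =>
  have hlt : t.length = n := by simpa using hl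
  have ha0 : (0 : ℤ) ≤ a := by simpa using hp [a] ⟨t, rfl⟩
  have hav := ha a List.mem_cons_self
  have hat : ∀ x ∈ t, x = 1 ∨ x = 0 ∨ x = -1 := fun x hx => ha x (List.mem_cons_of_mem a hx)
  rcases hav with rfl | rfl | rfl
  · -- a = 1
    right
    have hts : t.sum = -1 := by simp at hs; omega
    have hpre : ∀ p : List ℤ, p <+: t → -1 ≤ p.sum := by
      intro p hp'
      have := hp (1 :: p) (by simpa using hp')
      simp at this; omega
    have hex : ∃ k, (t.take k).sum = -1 := ⟨t.length, by simpa using hts⟩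
    set k := Nat.find hex with hkdef
    have hk : (t.take k).sum = -1 := Nat.find_spec hex
    have hkle : k ≤ t.length := Nat.find_le (by simpa using hts)
    have hk1 : 1 ≤ k := by
      rcases Nat.eq_zero_or_pos k with h0 | h
      · rw [h0] at hk; simp at hk
      · exact h
    have hmin : ∀ m, m < k → 0 ≤ (t.take m).sum := by
      intro m hm
      have h1 := hpre (t.take m) (List.take_prefix m t)
      have h2 := Nat.find_min hex hm
      omega
    have hkl : k - 1 < t.length := by omega
    have hsum2 : (t.take (k - 1)).sum + t[k - 1] = -1 := by
      have h2 := List.take_concat_get hkl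
      have h3 : (t.take (k - 1 + 1)).sum = -1 := by
        have hkk : k - 1 + 1 = k := by omega
        rw [hkk]; exact hk
      rw [← h2, List.concat_eq_append, List.sum_append, List.sum_cons, List.sum_nil] at h3
      omega
    have hg0 : 0 ≤ (t.take (k - 1)).sum := hmin (k - 1) (by omega)
    have hgm := hat t[k - 1] (List.getElem_mem hkl)
    have hgeq : t[k - 1] = -1 := by omega
    have hu0 : (t.take (k - 1)).sum = 0 := by omega
    have hsplit : t = t.take (k - 1) ++ (-1 : ℤ) :: t.drop k := by
      have hkk : k - 1 + 1 = k := by omega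
      conv_lhs => rw [← List.take_append_drop (k - 1) t]
      rw [List.drop_eq_getElem_cons hkl, hgeq, hkk]
    have hvs : (t.drop k).sum = 0 := by
      have := congrArg List.sum hsplit
      simp [hts, hu0] at this
      omega
    refine ⟨k - 1, by omega, t.take (k - 1), ⟨?_, ?_, hu0, ?_⟩, t.drop k,
      ⟨?_, ?_, hvs, ?_⟩, by rw [List.cons_append, ← hsplit]⟩
    · rw [List.length_take]; omega
    · exact fun x hx => hat x (List.mem_of_mem_take hx)
    · intro p hp'
      have hpt : p <+: t := hp'.trans (List.take_prefix _ t)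
      have hpl : p.length ≤ k - 1 := by
        have := hp'.length_le; rw [List.length_take] at this; omega
      have : p = t.take p.length := List.prefix_iff_eq_take.mp hpt
      rw [this]
      exact hmin _ (by omega)
    · rw [List.length_drop]; omega
    · exact fun x hx => hat x (List.mem_of_mem_drop hx)
    · intro p hp'
      have hbig : (1 : ℤ) :: (t.take (k - 1) ++ (-1 : ℤ) :: p) <+:
          1 :: (t.take (k - 1) ++ (-1 : ℤ) :: t.drop k) := by
        simpa using hp'
      rw [← hsplit] at hbig
      have := hp _ hbig
      simp [hu0] at this
      omega
  · -- a = 0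
    left
    refine ⟨t, ⟨hlt, hat, by simpa using hs, ?_⟩, rfl⟩
    intro p hp'
    have := hp ((0 : ℤ) :: p) (by simpa using hp')
    simpa using this
  · simp at ha0

lemma no_early {i j : ℕ} {u v u' v' : List ℤ} (hij : i < j) (hu : u ∈ Mset i)
    (hu' : u' ∈ Mset j) (h : u ++ (-1 : ℤ) :: v = u' ++ (-1) :: v') : False := by
  obtain ⟨hlu, -, hsu, -⟩ := hu
  obtain ⟨hlu', -, -, hpu'⟩ := hu'
  have hpre : u ++ [(-1 : ℤ)] <+: u' := by
    apply prefix_of_prefix_append (v := (-1 : ℤ) :: v')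
    · rw [← h]; exact ⟨v, by simp⟩
    · simp [hlu, hlu']; omega
  have := hpu' _ hpre
  simp [hsu] at this

noncomputable def MF (n : ℕ) : Finset (List ℤ) := (Mset_finite n).toFinset

lemma mem_MF {n : ℕ} {w : List ℤ} : w ∈ MF n ↔ w ∈ Mset n := (Mset_finite n).mem_toFinset

lemma MF_succ (n : ℕ) : MF (n + 1) =
    (MF n).image (fun t => (0 : ℤ) :: t) ∪
    (Finset.range n).biUnion (fun i => ((MF i) ×ˢ (MF (n - 1 - i))).image
      (fun p : List ℤ × List ℤ => (1 : ℤ) :: p.1 ++ (-1) :: p.2)) := by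
  ext w
  simp only [mem_MF, Finset.mem_union, Finset.mem_image, Finset.mem_biUnion, Finset.mem_range,
    Finset.mem_product, Prod.exists]
  constructor
  · intro hw
    rcases decomp hw with ⟨t, ht, rfl⟩ | ⟨i, hi, u, hu, v, hv, rfl⟩
    · exact Or.inl ⟨t, ht, rfl⟩
    · exact Or.inr ⟨i, hi, u, v, ⟨hu, hv⟩, rfl⟩
  · rintro (⟨t, ht, rfl⟩ | ⟨i, hi, u, v, ⟨hu, hv⟩, rfl⟩)
    · exact mem_zero_cons ht
    · exact mem_one_cons hi hu hv

lemma MF_card_succ (n : ℕ) : (MF (n + 1)).card =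
    (MF n).card + ∑ i ∈ Finset.range n, (MF i).card * (MF (n - 1 - i)).card := by
  rw [MF_succ]
  rw [Finset.card_union_of_disjoint]
  · congr 1
    · exact Finset.card_image_of_injective _ (fun a b h => by injection h)
    · rw [Finset.card_biUnion]
      · apply Finset.sum_congr rfl
        intro i hi
        rw [Finset.card_image_of_injOn, Finset.card_product]
        rintro ⟨u, v⟩ huv ⟨u', v'⟩ huv' heq
        simp only [Finset.mem_coe, Finset.mem_product, mem_MF] at huv huv'
        have h2 : u ++ (-1 : ℤ) :: v = u' ++ (-1) :: v' := by
          have := heq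
          simp only [List.cons_append] at this
          injection this
        have hlen : u.length = u'.length := by rw [huv.1.1, huv'.1.1]
        obtain ⟨h3, h4⟩ := List.append_inj h2 hlen
        have h5 : v = v' := by injection h4
        simp [h3, h5]
      · intro i hi j hj hij
        rw [Function.onFun, Finset.disjoint_left]
        rintro w hwi hwj
        simp only [Finset.mem_image, Finset.mem_product, mem_MF, Prod.exists] at hwi hwj
        obtain ⟨u, v, ⟨hu, hv⟩, rfl⟩ := hwi
        obtain ⟨u', v', ⟨hu', hv'⟩, heq⟩ := hwj
        have h2 : u' ++ (-1 : ℤ) :: v' = u ++ (-1) :: v := by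
          simp only [List.cons_append] at heq
          injection heq
        rcases hij.lt_or_gt with h | h
        · exact no_early h hu hu' h2.symm
        · exact no_early h hu' hu h2
  · rw [Finset.disjoint_left]
    rintro w hw0 hw1
    simp only [Finset.mem_image] at hw0
    obtain ⟨t, -, rfl⟩ := hw0
    simp only [Finset.mem_biUnion, Finset.mem_image, Prod.exists] at hw1
    obtain ⟨i, -, u, v, -, heq⟩ := hw1
    simp only [List.cons_append] at heq
    have : (1 : ℤ) = 0 := by injection heq
    norm_num at this

lemma MF_card_eq (n : ℕ) : (MF n).card = motzkin n := by
  induction n using Nat.strong_induction_on with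
  | _ n ih =>
    match n with
    | 0 =>
      have h0 : MF 0 = {([] : List ℤ)} := by
        ext w
        simp only [mem_MF, Finset.mem_singleton]
        constructor
        · intro hw
          exact List.length_eq_zero_iff.mp hw.1
        · rintro rfl
          refine ⟨rfl, by simp, rfl, ?_⟩
          intro p hp
          rw [List.prefix_nil.mp hp]
          exact le_refl 0
      rw [h0, Finset.card_singleton, motzkin]
    | n + 1 =>
      rw [MF_card_succ, motzkin]
      rw [Finset.sum_attach (Finset.range n) (fun i => motzkin i * motzkin (n - 1 - i))]
      congr 1
      · exact ih n (Nat.lt_succ_self n)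
      · apply Finset.sum_congr rfl
        intro i hi
        have hi' := Finset.mem_range.mp hi
        rw [ih i (by omega), ih (n - 1 - i) (by omega)]

theorem motzkin_words_card (n : ℕ) :
    {w : List ℤ | w.length = n ∧ (∀ x ∈ w, x = 1 ∨ x = 0 ∨ x = -1) ∧ w.sum = 0 ∧
      ∀ p, p <+: w → 0 ≤ p.sum}.ncard = motzkin n := by
  have h : {w : List ℤ | w.length = n ∧ (∀ x ∈ w, x = 1 ∨ x = 0 ∨ x = -1) ∧ w.sum = 0 ∧
      ∀ p, p <+: w → 0 ≤ p.sum} = Mset n := rfl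
  rw [h, Set.ncard_eq_toFinset_card _ (Mset_finite n)]
  exact MF_card_eq n
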